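/- For every dimension d ≥ 1 there exists a constant c > 0 such that for all integers 1 ≤ n ≤ N there exist finite sets T_R, T_B ⊂ ℝ^d with |T_R| = n and |T_B| = N with the following property: every finite family H of affine hyperplanes in ℝ^d that covers T = T_R ∪ T_B satisfies |H| ≥ c · n · N^{d−1}. -/

import Mathlib

open scoped RealInnerProductSpace
open Finset

namespace Stmt6Aux

variable {d : ℕ}

noncomputable def sgl (i : Fin d) (a : ℝ) : EuclideanSpace ℝ (Fin d) :=
  EuclideanSpace.single i a

lemma sgl_apply (i : Fin d) (a : ℝ) (t : Fin d) : sgl i a t = if t = i then a else 0 :=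
  EuclideanSpace.single_apply i a t

lemma innerS (w : EuclideanSpace ℝ (Fin d)) (i : Fin d) (a : ℝ) :
    ⟪w, sgl i a⟫ = w i * a := by
  rw [sgl, EuclideanSpace.inner_single_right]
  simp [mul_comm]

lemma sgl_inj {i : Fin d} {a b : ℝ} (h : sgl i a = sgl i b) : a = b := by
  have := congrArg (fun v => v i) h
  simpa [sgl_apply] using this

/-- red point number `j` -/
noncomputable def rpt (iH : Fin d) (ε : ℝ) (j : ℕ) : EuclideanSpace ℝ (Fin d) :=
  sgl iH (4*ε*j)

/-- blue "cap" point just above red `j` -/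
noncomputable def spt (iH : Fin d) (ε : ℝ) (j : ℕ) : EuclideanSpace ℝ (Fin d) :=
  sgl iH (4*ε*j + 2*ε)

/-- far blue pin, positive side, direction `e`, level `k` -/
noncomputable def ppt (iH e : Fin d) (k : ℕ) : EuclideanSpace ℝ (Fin d) :=
  sgl e 1 + sgl iH (3*k+4)

/-- far blue pin, negative side -/
noncomputable def qpt (iH e : Fin d) (k : ℕ) : EuclideanSpace ℝ (Fin d) :=
  sgl e (-1) + sgl iH (-(3*(k:ℝ))-2)

/-- padding red points -/
noncomputable def padR (iH : Fin d) (t : ℕ) : EuclideanSpace ℝ (Fin d) :=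
  sgl iH (-1 - t)

/-- padding blue points -/
noncomputable def padB (iH : Fin d) (t : ℕ) : EuclideanSpace ℝ (Fin d) :=
  sgl iH (3*t+3)

lemma inner_rpt (w : EuclideanSpace ℝ (Fin d)) (iH : Fin d) (ε : ℝ) (j : ℕ) :
    ⟪w, rpt iH ε j⟫ = w iH * (4*ε*j) := innerS w iH _

lemma inner_spt (w : EuclideanSpace ℝ (Fin d)) (iH : Fin d) (ε : ℝ) (j : ℕ) :
    ⟪w, spt iH ε j⟫ = w iH * (4*ε*j + 2*ε) := innerS w iH _

lemma inner_ppt (w : EuclideanSpace ℝ (Fin d)) (iH e : Fin d) (k : ℕ) :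
    ⟪w, ppt iH e k⟫ = w e + w iH * (3*k+4) := by
  rw [ppt, inner_add_right, innerS, innerS, mul_one]

lemma inner_qpt (w : EuclideanSpace ℝ (Fin d)) (iH e : Fin d) (k : ℕ) :
    ⟪w, qpt iH e k⟫ = -(w e) + w iH * (-(3*(k:ℝ))-2) := by
  rw [qpt, inner_add_right, innerS, innerS]
  ring

lemma core_j {wH c ε : ℝ} (hε : 0 < ε) {j j' : ℕ}
    (A1 : wH * (4*ε*j) ≤ c) (B2 : c ≤ wH * (4*ε*j' + 2*ε)) (hwH : 0 < wH) : j ≤ j' := by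
  by_contra hcon
  push_neg at hcon
  have hj : (j' : ℝ) + 1 ≤ (j : ℝ) := by exact_mod_cast hcon
  have h1 : wH * (4*ε*j) ≤ wH * (4*ε*j' + 2*ε) := le_trans A1 B2
  have h2 : (4*ε*(j:ℝ)) ≤ 4*ε*j' + 2*ε := le_of_mul_le_mul_left h1 hwH
  nlinarith [mul_le_mul_of_nonneg_left hj (by positivity : (0:ℝ) ≤ 4*ε)]

lemma core_k {wE wH c : ℝ} {k k' : ℕ} (hc : 0 ≤ c) (hwH : 0 < wH)
    (A3 : c ≤ wE + wH * (3*(k:ℝ)+4)) (B4 : c ≤ -wE + wH * (-(3*(k':ℝ))-2)) : k' ≤ k := by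
  by_contra hcon
  push_neg at hcon
  have hk : (k:ℝ) + 1 ≤ (k' : ℝ) := by exact_mod_cast hcon
  nlinarith [mul_le_mul_of_nonneg_left
    (show 3*(k:ℝ) - 3*(k':ℝ) + 2 ≤ -1 by linarith) (le_of_lt hwH)]

lemma sglS_apply_self (i : Fin d) (a : ℝ) : sgl i a i = a := by simp [sgl_apply]

lemma sglS_apply_ne (i t : Fin d) (a : ℝ) (h : t ≠ i) : sgl i a t = 0 := by
  simp [sgl_apply, h]

lemma ppt_apply_iH (iH e : Fin d) (k : ℕ) (hne : e ≠ iH) : ppt iH e k iH = 3*k+4 := by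
  have : (sgl e 1 + sgl iH (3*(k:ℝ)+4)) iH = sgl e 1 iH + sgl iH (3*(k:ℝ)+4) iH := rfl
  rw [ppt, this, sglS_apply_self, sglS_apply_ne e iH 1 (Ne.symm hne)]
  ring

lemma ppt_apply_e (iH e : Fin d) (k : ℕ) (hne : e ≠ iH) : ppt iH e k e = 1 := by
  have : (sgl e 1 + sgl iH (3*(k:ℝ)+4)) e = sgl e 1 e + sgl iH (3*(k:ℝ)+4) e := rfl
  rw [ppt, this, sglS_apply_self, sglS_apply_ne iH e _ hne]
  ring

lemma ppt_apply_other (iH e t : Fin d) (k : ℕ) (ht1 : t ≠ e) (ht2 : t ≠ iH) :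
    ppt iH e k t = 0 := by
  have : (sgl e 1 + sgl iH (3*(k:ℝ)+4)) t = sgl e 1 t + sgl iH (3*(k:ℝ)+4) t := rfl
  rw [ppt, this, sglS_apply_ne e t 1 ht1, sglS_apply_ne iH t _ ht2]
  ring

lemma qpt_apply_iH (iH e : Fin d) (k : ℕ) (hne : e ≠ iH) : qpt iH e k iH = -(3*(k:ℝ))-2 := by
  have : (sgl e (-1) + sgl iH (-(3*(k:ℝ))-2)) iH = sgl e (-1) iH + sgl iH (-(3*(k:ℝ))-2) iH := rfl
  rw [qpt, this, sglS_apply_self, sglS_apply_ne e iH (-1) (Ne.symm hne)]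
  ring

lemma qpt_apply_e (iH e : Fin d) (k : ℕ) (hne : e ≠ iH) : qpt iH e k e = -1 := by
  have : (sgl e (-1) + sgl iH (-(3*(k:ℝ))-2)) e = sgl e (-1) e + sgl iH (-(3*(k:ℝ))-2) e := rfl
  rw [qpt, this, sglS_apply_self, sglS_apply_ne iH e _ hne]
  ring

lemma qpt_apply_other (iH e t : Fin d) (k : ℕ) (ht1 : t ≠ e) (ht2 : t ≠ iH) :
    qpt iH e k t = 0 := by
  have : (sgl e (-1) + sgl iH (-(3*(k:ℝ))-2)) t = sgl e (-1) t + sgl iH (-(3*(k:ℝ))-2) t := rfl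
  rw [qpt, this, sglS_apply_ne e t (-1) ht1, sglS_apply_ne iH t _ ht2]
  ring

lemma padcontra {ε t u n' : ℝ} (hε0 : 0 < ε) (hε1 : ε*(8*n'+8) = 1)
    (htn : t + 1 ≤ n') (hu0 : 0 ≤ u) (hval : 4*ε*t + 2*ε = 3*u+3) : False := by
  nlinarith [mul_le_mul_of_nonneg_left htn hε0.le]

lemma sign_nonneg {wH c ε : ℝ} {j : ℕ} (hε0 : 0 < ε)
    (P1 : wH * (4*ε*j) ≤ c) (P2 : c ≤ wH * (4*ε*j + 2*ε)) : 0 ≤ wH := by nlinarith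

lemma zero_c {wH c ε : ℝ} {j : ℕ} (hwH : wH = 0)
    (P1 : wH*(4*ε*j) ≤ c) (P2 : c ≤ wH*(4*ε*j+2*ε)) : c = 0 := by
  subst hwH
  simp only [zero_mul] at P1 P2
  linarith

lemma zero_coord {wE wH c k : ℝ} (hwH : wH = 0) (hc : c = 0)
    (P3 : c ≤ wE + wH*(3*k+4)) (P4 : c ≤ -wE + wH*(-(3*k)-2)) : wE = 0 := by
  subst hwH; subst hc
  simp only [zero_mul] at P3 P4
  linarith

lemma c_nonneg {wH c ε : ℝ} {j : ℕ} (hwH : 0 ≤ wH) (hε0 : 0 < ε)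
    (P1 : wH*(4*ε*j) ≤ c) : 0 ≤ c :=
  le_trans (by positivity) P1

lemma sep_lt_one {ε n' : ℝ} {j : ℕ} (hε0 : 0 < ε) (hε1 : ε*(8*n'+8) = 1)
    (hj : (j:ℝ) + 1 ≤ n') : 4*ε*(j:ℝ) + ε < 1 := by
  nlinarith [mul_le_mul_of_nonneg_left hj hε0.le]

lemma pack_aux {d : ℕ} (iH : Fin d) {D : ℕ} (embF : Fin D → Fin d) {M : ℕ}
    (k : Fin D → Fin M) (j : ℕ) (ε cc : ℝ) (w : EuclideanSpace ℝ (Fin d))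
    (hyp : (⟪w, rpt iH ε j⟫ ≤ cc ∧ cc ≤ ⟪w, spt iH ε j⟫ ∧
          ∀ i : Fin D, cc ≤ ⟪w, ppt iH (embF i) ((k i):ℕ)⟫ ∧
            cc ≤ ⟪w, qpt iH (embF i) ((k i):ℕ)⟫) ∨
         (cc ≤ ⟪w, rpt iH ε j⟫ ∧ ⟪w, spt iH ε j⟫ ≤ cc ∧
          ∀ i : Fin D, ⟪w, ppt iH (embF i) ((k i):ℕ)⟫ ≤ cc ∧
            ⟪w, qpt iH (embF i) ((k i):ℕ)⟫ ≤ cc)) :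
    ∃ s : ℝ, (s = 1 ∨ s = -1) ∧
      (s * w iH) * (4*ε*(j:ℝ)) ≤ s*cc ∧
      s*cc ≤ (s * w iH) * (4*ε*(j:ℝ) + 2*ε) ∧
      (∀ i : Fin D, s*cc ≤ (s * w (embF i)) + (s * w iH)*(3*(((k i):ℕ):ℝ)+4)) ∧
      (∀ i : Fin D, s*cc ≤ -(s * w (embF i)) + (s * w iH)*(-(3*(((k i):ℕ):ℝ))-2)) := by
  rcases hyp with ⟨h1, h2, h34⟩ | ⟨h1, h2, h34⟩
  · rw [inner_rpt] at h1
    rw [inner_spt] at h2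
    refine ⟨1, Or.inl rfl, by nlinarith, by nlinarith, fun i => ?_, fun i => ?_⟩
    · have h3 := (h34 i).1
      rw [inner_ppt] at h3
      nlinarith
    · have h4 := (h34 i).2
      rw [inner_qpt] at h4
      nlinarith
  · rw [inner_rpt] at h1
    rw [inner_spt] at h2
    refine ⟨-1, Or.inr rfl, by nlinarith, by nlinarith, fun i => ?_, fun i => ?_⟩
    · have h3 := (h34 i).1
      rw [inner_ppt] at h3
      nlinarith
    · have h4 := (h34 i).2
      rw [inner_qpt] at h4
      nlinarith

end Stmt6Aux

open Stmt6Aux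

set_option maxHeartbeats 2000000 in
/-- For every `d ≥ 1` there is a constant `c > 0` such that for all
`1 ≤ n ≤ N` there are finite sets `T_R, T_B ⊆ ℝ^d` with `|T_R| = n`, `|T_B| = N` such that
every finite family `H` of affine hyperplanes (represented by pairs `(w, c)` with `w ≠ 0`)
covering `T = T_R ∪ T_B` — i.e. weakly separating every strongly separable bichromatic
subset of `T` having both colors — satisfies `|H| ≥ c · n · N^{d−1}`. -/
theorem stmt_6 (d : ℕ) (hd : 1 ≤ d) :
    ∃ c : ℝ, 0 < c ∧ ∀ n N : ℕ, 1 ≤ n → n ≤ N →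
      ∃ TR TB : Finset (EuclideanSpace ℝ (Fin d)),
        TR.card = n ∧ TB.card = N ∧
        ∀ H : Finset (EuclideanSpace ℝ (Fin d) × ℝ),
          (∀ h ∈ H, h.1 ≠ 0) →
          (∀ VR ⊆ TR, ∀ VB ⊆ TB, VR.Nonempty → VB.Nonempty →
            (∃ (w : EuclideanSpace ℝ (Fin d)) (a : ℝ), w ≠ 0 ∧
              (∀ r ∈ VR, ⟪w, r⟫ < a) ∧ (∀ b ∈ VB, a < ⟪w, b⟫)) →
            ∃ h ∈ H,
              ((∀ r ∈ VR, ⟪h.1, r⟫ ≤ h.2) ∧ (∀ b ∈ VB, h.2 ≤ ⟪h.1, b⟫)) ∨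
              ((∀ r ∈ VR, h.2 ≤ ⟪h.1, r⟫) ∧ (∀ b ∈ VB, ⟪h.1, b⟫ ≤ h.2))) →
          c * n * (N : ℝ) ^ (d - 1) ≤ (H.card : ℝ) := by

  classical
  have hd1 : d - 1 < d := by omega
  refine ⟨1/(2*(8*(d:ℝ))^d), by positivity, ?_⟩
  intro n N hn hnN
  have hN1 : 1 ≤ N := le_trans hn hnN
  obtain ⟨M, hMdef⟩ : ∃ M, M = N / (4*(d-1)) := ⟨_, rfl⟩
  have hx4 : 4*((d-1)*M) ≤ N := by
    have h := Nat.div_mul_le_self N (4*(d-1))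
    calc 4*((d-1)*M) = N/(4*(d-1)) * (4*(d-1)) := by rw [hMdef]; ring
    _ ≤ N := h
  have hM1 : 1 ≤ d - 1 → 4*(d-1) ≤ N → 1 ≤ M := by
    intro hD1 hbig
    rw [hMdef]
    exact (Nat.one_le_div_iff (by omega)).2 hbig
  have hN8 : 1 ≤ d - 1 → 4*(d-1) ≤ N → N ≤ 8*((d-1)*M) := by
    intro hD1 hbig
    have hpos : 0 < 4*(d-1) := by omega
    have hdm := Nat.div_add_mod N (4*(d-1))
    rw [← hMdef] at hdm
    have hdm' : 4*((d-1)*M) + N % (4*(d-1)) = N := by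
      rw [show 4*((d-1)*M) = 4*(d-1)*M from (Nat.mul_assoc 4 (d-1) M).symm]
      exact hdm
    have hmod : N % (4*(d-1)) < 4*(d-1) := Nat.mod_lt N hpos
    have hub : 4*(d-1) ≤ 4*((d-1)*M) := by
      have := hM1 hD1 hbig
      calc 4*(d-1) = 4*((d-1)*1) := by ring
      _ ≤ 4*((d-1)*M) := by
          exact Nat.mul_le_mul_left 4 (Nat.mul_le_mul_left (d-1) (hM1 hD1 hbig))
    generalize (d-1)*M = p at hdm' hub ⊢
    generalize N % (4*(d-1)) = q at hdm' hmod
    omega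
  obtain ⟨n', hn'def⟩ : ∃ x, x = min n (N - 2*((d-1)*M)) := ⟨_, rfl⟩
  have hn'facts : 1 ≤ n' ∧ n' ≤ n ∧ 2*((d-1)*M) + n' ≤ N ∧ n ≤ 2*n' := by
    have hc := min_choice n (N - 2*((d-1)*M))
    rw [← hn'def] at hc
    have h1 := hx4
    have h2 : n' ≤ n := by
      rw [hn'def]; exact min_le_left _ _
    have h3 : n' ≤ N - 2*((d-1)*M) := by
      rw [hn'def]; exact min_le_right _ _
    generalize (d-1)*M = p at h1 h3 hc
    rcases hc with hc|hc <;> omega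
  obtain ⟨hn'1, hn'n, h2DM, hn2n'⟩ := hn'facts
  obtain ⟨ε, hεdef⟩ : ∃ x : ℝ, x = 1/(8*(n':ℝ)+8) := ⟨_, rfl⟩
  have hε0 : 0 < ε := by rw [hεdef]; positivity
  have hε1 : ε * (8*(n':ℝ)+8) = 1 := by rw [hεdef]; field_simp
  set iH : Fin d := ⟨d-1, hd1⟩ with hiHdef
  set embF : Fin (d-1) → Fin d := fun i => ⟨(i:ℕ), by have := i.2; omega⟩ with hembdef
  have hembne : ∀ i : Fin (d-1), embF i ≠ iH := by
    intro i h
    have hv := congrArg Fin.val h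
    have := i.2
    simp [hembdef, hiHdef] at hv
    omega
  have hembinj : ∀ i i' : Fin (d-1), embF i = embF i' → i = i' := by
    intro i i' h
    have hv := congrArg Fin.val h
    simp [hembdef] at hv
    exact Fin.ext hv
  -- the point sets
  set TR : Finset (EuclideanSpace ℝ (Fin d)) :=
    (range n).image (fun t => if t < n' then rpt iH ε t else padR iH t) with hTRdef
  set Bs : Finset (EuclideanSpace ℝ (Fin d)) :=
    (range n').image (fun t => spt iH ε t) with hBsdef
  set BP : Finset (EuclideanSpace ℝ (Fin d)) :=
    (univ : Finset (Fin (d-1) × Fin M)).image (fun p => ppt iH (embF p.1) (p.2:ℕ)) with hBPdef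
  set BQ : Finset (EuclideanSpace ℝ (Fin d)) :=
    (univ : Finset (Fin (d-1) × Fin M)).image (fun p => qpt iH (embF p.1) (p.2:ℕ)) with hBQdef
  set Bpad : Finset (EuclideanSpace ℝ (Fin d)) :=
    (range (N - n' - 2*((d-1)*M))).image (fun t => padB iH t) with hBpaddef
  set TB : Finset (EuclideanSpace ℝ (Fin d)) := Bs ∪ BP ∪ BQ ∪ Bpad with hTBdef
  refine ⟨TR, TB, ?_, ?_, ?_⟩
  · -- card TR = n
    have hinj : Set.InjOn (fun t => if t < n' then rpt iH ε t else padR iH t) ↑(range n) := by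
      intro a ha b hb heq
      simp only [mem_coe, mem_range] at ha hb
      replace heq : (if a < n' then rpt iH ε a else padR iH a)
          = (if b < n' then rpt iH ε b else padR iH b) := heq
      by_cases h1 : a < n' <;> by_cases h2 : b < n'
      · rw [if_pos h1, if_pos h2] at heq
        simp only [rpt] at heq
        have hv := sgl_inj heq
        have : (a:ℝ) = b :=
          mul_left_cancel₀ (ne_of_gt (by positivity : (0:ℝ) < 4*ε)) (by linarith)
        exact_mod_cast this
      · rw [if_pos h1, if_neg h2] at heq
        simp only [rpt, padR] at heq
        have hv := sgl_inj heq
        have ha' : (0:ℝ) ≤ 4*ε*a := by positivity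
        have hb' : (0:ℝ) ≤ (b:ℝ) := by positivity
        linarith
      · rw [if_neg h1, if_pos h2] at heq
        simp only [rpt, padR] at heq
        have hv := sgl_inj heq
        have hb' : (0:ℝ) ≤ 4*ε*b := by positivity
        have ha' : (0:ℝ) ≤ (a:ℝ) := by positivity
        linarith
      · rw [if_neg h1, if_neg h2] at heq
        simp only [padR] at heq
        have hv := sgl_inj heq
        have : (a:ℝ) = b := by linarith
        exact_mod_cast this
    rw [hTRdef, card_image_of_injOn hinj, card_range]
  · -- card TB = N
    have hBscard : Bs.card = n' := by
      have hinj : Set.InjOn (fun t => spt iH ε t) ↑(range n') := by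
        intro a _ b _ heq
        replace heq : spt iH ε a = spt iH ε b := heq
        simp only [spt] at heq
        have hv := sgl_inj heq
        have : (a:ℝ) = b :=
          mul_left_cancel₀ (ne_of_gt (by positivity : (0:ℝ) < 4*ε)) (by linarith)
        exact_mod_cast this
      rw [hBsdef, card_image_of_injOn hinj, card_range]
    have hBPinj : Set.InjOn (fun p : Fin (d-1) × Fin M => ppt iH (embF p.1) (p.2:ℕ))
        ↑(univ : Finset (Fin (d-1) × Fin M)) := by
      intro p _ q _ heq
      replace heq : ppt iH (embF p.1) (p.2:ℕ) = ppt iH (embF q.1) (q.2:ℕ) := heq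
      by_cases hpq : embF p.1 = embF q.1
      · have hp1 : p.1 = q.1 := hembinj _ _ hpq
        have h2 := congrArg (fun v => v iH) heq
        simp only at h2
        rw [ppt_apply_iH _ _ _ (hembne p.1), ppt_apply_iH _ _ _ (hembne q.1)] at h2
        have : ((p.2:ℕ):ℝ) = ((q.2:ℕ):ℝ) := by linarith
        have hp2 : p.2 = q.2 := by
          apply Fin.ext; exact_mod_cast this
        exact Prod.ext hp1 hp2
      · have h1 := congrArg (fun v => v (embF p.1)) heq
        simp only at h1
        rw [ppt_apply_e _ _ _ (hembne p.1),
          ppt_apply_other _ _ _ _ hpq (hembne p.1)] at h1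
        norm_num at h1
    have hBPcard : BP.card = (d-1)*M := by
      rw [hBPdef, card_image_of_injOn hBPinj, card_univ]
      simp
    have hBQinj : Set.InjOn (fun p : Fin (d-1) × Fin M => qpt iH (embF p.1) (p.2:ℕ))
        ↑(univ : Finset (Fin (d-1) × Fin M)) := by
      intro p _ q _ heq
      replace heq : qpt iH (embF p.1) (p.2:ℕ) = qpt iH (embF q.1) (q.2:ℕ) := heq
      by_cases hpq : embF p.1 = embF q.1
      · have hp1 : p.1 = q.1 := hembinj _ _ hpq
        have h2 := congrArg (fun v => v iH) heq
        simp only at h2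
        rw [qpt_apply_iH _ _ _ (hembne p.1), qpt_apply_iH _ _ _ (hembne q.1)] at h2
        have : ((p.2:ℕ):ℝ) = ((q.2:ℕ):ℝ) := by linarith
        have hp2 : p.2 = q.2 := by
          apply Fin.ext; exact_mod_cast this
        exact Prod.ext hp1 hp2
      · have h1 := congrArg (fun v => v (embF p.1)) heq
        simp only at h1
        rw [qpt_apply_e _ _ _ (hembne p.1),
          qpt_apply_other _ _ _ _ hpq (hembne p.1)] at h1
        norm_num at h1
    have hBQcard : BQ.card = (d-1)*M := by
      rw [hBQdef, card_image_of_injOn hBQinj, card_univ]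
      simp
    have hBpadcard : Bpad.card = N - n' - 2*((d-1)*M) := by
      have hinj : Set.InjOn (fun t => padB iH t) ↑(range (N - n' - 2*((d-1)*M))) := by
        intro a _ b _ heq
        replace heq : padB iH a = padB iH b := heq
        simp only [padB] at heq
        have hv := sgl_inj heq
        have : (a:ℝ) = b := by linarith
        exact_mod_cast this
      rw [hBpaddef, card_image_of_injOn hinj, card_range]
    -- disjointness
    have dBsBP : Disjoint Bs BP := by
      rw [disjoint_left]
      rintro x hx hx'
      rw [hBsdef, mem_image] at hx
      rw [hBPdef, mem_image] at hx'
      obtain ⟨t, _, hxt⟩ := hx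
      obtain ⟨p, _, hxp⟩ := hx'
      have := congrArg (fun v => v (embF p.1)) (hxt.trans hxp.symm)
      simp only [spt] at this
      rw [sglS_apply_ne _ _ _ (hembne p.1), ppt_apply_e _ _ _ (hembne p.1)] at this
      norm_num at this
    have dBsBQ : Disjoint Bs BQ := by
      rw [disjoint_left]
      rintro x hx hx'
      rw [hBsdef, mem_image] at hx
      rw [hBQdef, mem_image] at hx'
      obtain ⟨t, _, hxt⟩ := hx
      obtain ⟨p, _, hxp⟩ := hx'
      have := congrArg (fun v => v (embF p.1)) (hxt.trans hxp.symm)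
      simp only [spt] at this
      rw [sglS_apply_ne _ _ _ (hembne p.1), qpt_apply_e _ _ _ (hembne p.1)] at this
      norm_num at this
    have dBsBpad : Disjoint Bs Bpad := by
      rw [disjoint_left]
      rintro x hx hx'
      rw [hBsdef, mem_image] at hx
      rw [hBpaddef, mem_image] at hx'
      obtain ⟨t, ht, hxt⟩ := hx
      obtain ⟨u, _, hxu⟩ := hx'
      rw [mem_range] at ht
      have hval : 4*ε*(t:ℝ) + 2*ε = 3*(u:ℝ)+3 := by
        have h0 : spt iH ε t iH = padB iH u iH := congrArg (fun v => v iH) (hxt.trans hxu.symm)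
        rw [spt, padB, sglS_apply_self, sglS_apply_self] at h0
        exact h0
      have htn : (t:ℝ) + 1 ≤ (n':ℝ) := by exact_mod_cast ht
      have hu0 : (0:ℝ) ≤ (u:ℝ) := by positivity
      exact padcontra hε0 hε1 htn hu0 hval
    have dBPBQ : Disjoint BP BQ := by
      rw [disjoint_left]
      rintro x hx hx'
      rw [hBPdef, mem_image] at hx
      rw [hBQdef, mem_image] at hx'
      obtain ⟨p, _, hxp⟩ := hx
      obtain ⟨q, _, hxq⟩ := hx'
      have heq := hxp.trans hxq.symm
      have := congrArg (fun v => v (embF p.1)) heq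
      simp only at this
      rw [ppt_apply_e _ _ _ (hembne p.1)] at this
      by_cases hpq : embF p.1 = embF q.1
      · rw [hpq, qpt_apply_e _ _ _ (hembne q.1)] at this
        norm_num at this
      · rw [qpt_apply_other _ _ _ _ hpq (hembne p.1)] at this
        norm_num at this
    have dBPBpad : Disjoint BP Bpad := by
      rw [disjoint_left]
      rintro x hx hx'
      rw [hBPdef, mem_image] at hx
      rw [hBpaddef, mem_image] at hx'
      obtain ⟨p, _, hxp⟩ := hx
      obtain ⟨u, _, hxu⟩ := hx'
      have := congrArg (fun v => v (embF p.1)) (hxp.trans hxu.symm)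
      simp only [padB] at this
      rw [ppt_apply_e _ _ _ (hembne p.1), sglS_apply_ne _ _ _ (hembne p.1)] at this
      norm_num at this
    have dBQBpad : Disjoint BQ Bpad := by
      rw [disjoint_left]
      rintro x hx hx'
      rw [hBQdef, mem_image] at hx
      rw [hBpaddef, mem_image] at hx'
      obtain ⟨p, _, hxp⟩ := hx
      obtain ⟨u, _, hxu⟩ := hx'
      have := congrArg (fun v => v (embF p.1)) (hxp.trans hxu.symm)
      simp only [padB] at this
      rw [qpt_apply_e _ _ _ (hembne p.1), sglS_apply_ne _ _ _ (hembne p.1)] at this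
      norm_num at this
    have hdisj1 : Disjoint (Bs ∪ BP) BQ := disjoint_union_left.2 ⟨dBsBQ, dBPBQ⟩
    have hdisj2 : Disjoint (Bs ∪ BP ∪ BQ) Bpad :=
      disjoint_union_left.2 ⟨disjoint_union_left.2 ⟨dBsBpad, dBPBpad⟩, dBQBpad⟩
    rw [hTBdef, card_union_of_disjoint hdisj2, card_union_of_disjoint hdisj1,
      card_union_of_disjoint dBsBP, hBscard, hBPcard, hBQcard, hBpadcard]
    have h := h2DM
    generalize (d-1)*M = p at h ⊢
    omega
  · -- the main bound
    intro Hfam hW hcov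
    -- membership facts
    have hrptTR : ∀ j : Fin n', rpt iH ε (j:ℕ) ∈ TR := by
      intro j
      rw [hTRdef, mem_image]
      exact ⟨(j:ℕ), mem_range.2 (lt_of_lt_of_le j.2 hn'n), by rw [if_pos j.2]⟩
    have hsptTB : ∀ j : Fin n', spt iH ε (j:ℕ) ∈ TB := by
      intro j
      rw [hTBdef]
      refine mem_union_left _ (mem_union_left _ (mem_union_left _ ?_))
      rw [hBsdef, mem_image]
      exact ⟨(j:ℕ), mem_range.2 j.2, rfl⟩
    have hpptTB : ∀ (i : Fin (d-1)) (kk : Fin M), ppt iH (embF i) (kk:ℕ) ∈ TB := by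
      intro i kk
      rw [hTBdef]
      refine mem_union_left _ (mem_union_left _ (mem_union_right _ ?_))
      rw [hBPdef, mem_image]
      exact ⟨(i,kk), mem_univ _, rfl⟩
    have hqptTB : ∀ (i : Fin (d-1)) (kk : Fin M), qpt iH (embF i) (kk:ℕ) ∈ TB := by
      intro i kk
      rw [hTBdef]
      refine mem_union_left _ (mem_union_right _ ?_)
      rw [hBQdef, mem_image]
      exact ⟨(i,kk), mem_univ _, rfl⟩
    have hiHval : ((iH : Fin d) : ℕ) = d - 1 := rfl
    -- each requirement is covered by some member of the family
    have hreq : ∀ (j : Fin n') (k : Fin (d-1) → Fin M), ∃ h, h ∈ Hfam ∧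
        ((⟪h.1, rpt iH ε (j:ℕ)⟫ ≤ h.2 ∧ h.2 ≤ ⟪h.1, spt iH ε (j:ℕ)⟫ ∧
          ∀ i : Fin (d-1), h.2 ≤ ⟪h.1, ppt iH (embF i) ((k i):ℕ)⟫ ∧
            h.2 ≤ ⟪h.1, qpt iH (embF i) ((k i):ℕ)⟫) ∨
         (h.2 ≤ ⟪h.1, rpt iH ε (j:ℕ)⟫ ∧ ⟪h.1, spt iH ε (j:ℕ)⟫ ≤ h.2 ∧
          ∀ i : Fin (d-1), ⟪h.1, ppt iH (embF i) ((k i):ℕ)⟫ ≤ h.2 ∧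
            ⟪h.1, qpt iH (embF i) ((k i):ℕ)⟫ ≤ h.2)) := by
      intro j k
      have hVRsub : {rpt iH ε (j:ℕ)} ⊆ TR := singleton_subset_iff.2 (hrptTR j)
      have hpmem : ∀ i : Fin (d-1), ppt iH (embF i) ((k i):ℕ) ∈
          insert (spt iH ε (j:ℕ))
            ((univ.image fun i : Fin (d-1) => ppt iH (embF i) ((k i):ℕ)) ∪
             (univ.image fun i : Fin (d-1) => qpt iH (embF i) ((k i):ℕ))) := by
        intro i
        exact mem_insert_of_mem (mem_union_left _ (mem_image_of_mem _ (mem_univ i)))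
      have hqmem : ∀ i : Fin (d-1), qpt iH (embF i) ((k i):ℕ) ∈
          insert (spt iH ε (j:ℕ))
            ((univ.image fun i : Fin (d-1) => ppt iH (embF i) ((k i):ℕ)) ∪
             (univ.image fun i : Fin (d-1) => qpt iH (embF i) ((k i):ℕ))) := by
        intro i
        exact mem_insert_of_mem (mem_union_right _ (mem_image_of_mem _ (mem_univ i)))
      have hVBsub : insert (spt iH ε (j:ℕ))
            ((univ.image fun i : Fin (d-1) => ppt iH (embF i) ((k i):ℕ)) ∪
             (univ.image fun i : Fin (d-1) => qpt iH (embF i) ((k i):ℕ))) ⊆ TB := by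
        intro b hb
        rcases mem_insert.1 hb with rfl | hb'
        · exact hsptTB j
        rcases mem_union.1 hb' with hb'' | hb''
        · obtain ⟨i, _, rfl⟩ := mem_image.1 hb''
          exact hpptTB i (k i)
        · obtain ⟨i, _, rfl⟩ := mem_image.1 hb''
          exact hqptTB i (k i)
      -- the separating witness
      obtain ⟨wit, hwit⟩ : ∃ wit : EuclideanSpace ℝ (Fin d),
          wit = (fun t : Fin d =>
            if h : (t:ℕ) < d - 1 then (-(3*(((k ⟨(t:ℕ), h⟩ : Fin M):ℕ):ℝ)) - 3) else 1) :=
        ⟨WithLp.toLp 2 _, rfl⟩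
      have hwitiH : wit iH = 1 := by
        rw [hwit]
        simp [hiHdef]
      have hwitemb : ∀ i : Fin (d-1), wit (embF i) = -(3*(((k i):ℕ):ℝ)) - 3 := by
        intro i
        rw [hwit]
        simp [hembdef]
      have hwitne : wit ≠ 0 := by
        intro h0
        have h1 : wit iH = (0 : EuclideanSpace ℝ (Fin d)) iH := by rw [h0]
        rw [hwitiH] at h1
        norm_num at h1
      have hjlt : ((j:ℕ):ℝ) + 1 ≤ (n':ℝ) := by exact_mod_cast j.2
      have hlt1 : 4*ε*((j:ℕ):ℝ) + ε < 1 := sep_lt_one hε0 hε1 hjlt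
      have hsepR : ∀ r ∈ ({rpt iH ε (j:ℕ)} : Finset (EuclideanSpace ℝ (Fin d))),
          ⟪wit, r⟫ < 4*ε*((j:ℕ):ℝ) + ε := by
        intro r hr
        rw [mem_singleton.1 hr, inner_rpt, hwitiH, one_mul]
        linarith
      have hsepB : ∀ b ∈ insert (spt iH ε (j:ℕ))
            ((univ.image fun i : Fin (d-1) => ppt iH (embF i) ((k i):ℕ)) ∪
             (univ.image fun i : Fin (d-1) => qpt iH (embF i) ((k i):ℕ))),
          4*ε*((j:ℕ):ℝ) + ε < ⟪wit, b⟫ := by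
        intro b hb
        rcases mem_insert.1 hb with rfl | hb'
        · rw [inner_spt, hwitiH, one_mul]
          linarith
        rcases mem_union.1 hb' with hb'' | hb''
        · obtain ⟨i, _, rfl⟩ := mem_image.1 hb''
          rw [inner_ppt, hwitiH, hwitemb i, one_mul]
          have heval : -(3*(((k i):ℕ):ℝ)) - 3 + (3*(((k i):ℕ):ℝ) + 4) = 1 := by ring
          rw [heval]
          exact hlt1
        · obtain ⟨i, _, rfl⟩ := mem_image.1 hb''
          rw [inner_qpt, hwitiH, hwitemb i, one_mul]
          have heval : -(-(3*(((k i):ℕ):ℝ)) - 3) + (-(3*(((k i):ℕ):ℝ)) - 2) = 1 := by ring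
          rw [heval]
          exact hlt1
      obtain ⟨h, hh, hor⟩ := hcov _ hVRsub _ hVBsub
        ⟨_, mem_singleton_self _⟩ ⟨_, mem_insert_self _ _⟩
        ⟨wit, 4*ε*((j:ℕ):ℝ) + ε, hwitne, hsepR, hsepB⟩
      refine ⟨h, hh, ?_⟩
      rcases hor with ⟨hr, hb⟩ | ⟨hr, hb⟩
      · exact Or.inl ⟨hr _ (mem_singleton_self _), hb _ (mem_insert_self _ _),
          fun i => ⟨hb _ (hpmem i), hb _ (hqmem i)⟩⟩
      · exact Or.inr ⟨hr _ (mem_singleton_self _), hb _ (mem_insert_self _ _),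
          fun i => ⟨hb _ (hpmem i), hb _ (hqmem i)⟩⟩
    choose φ hφ using hreq
    have pack : ∀ (j : Fin n') (k : Fin (d-1) → Fin M) (w : EuclideanSpace ℝ (Fin d)) (cc : ℝ),
        ((⟪w, rpt iH ε (j:ℕ)⟫ ≤ cc ∧ cc ≤ ⟪w, spt iH ε (j:ℕ)⟫ ∧
          ∀ i : Fin (d-1), cc ≤ ⟪w, ppt iH (embF i) ((k i):ℕ)⟫ ∧
            cc ≤ ⟪w, qpt iH (embF i) ((k i):ℕ)⟫) ∨
         (cc ≤ ⟪w, rpt iH ε (j:ℕ)⟫ ∧ ⟪w, spt iH ε (j:ℕ)⟫ ≤ cc ∧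
          ∀ i : Fin (d-1), ⟪w, ppt iH (embF i) ((k i):ℕ)⟫ ≤ cc ∧
            ⟪w, qpt iH (embF i) ((k i):ℕ)⟫ ≤ cc)) →
        ∃ s : ℝ, (s = 1 ∨ s = -1) ∧
          (s * w iH) * (4*ε*((j:ℕ):ℝ)) ≤ s*cc ∧
          s*cc ≤ (s * w iH) * (4*ε*((j:ℕ):ℝ) + 2*ε) ∧
          (∀ i : Fin (d-1), s*cc ≤ (s * w (embF i)) + (s * w iH)*(3*(((k i):ℕ):ℝ)+4)) ∧
          (∀ i : Fin (d-1), s*cc ≤ -(s * w (embF i)) + (s * w iH)*(-(3*(((k i):ℕ):ℝ))-2)) :=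
      fun j k w cc hyp => pack_aux iH embF k (j:ℕ) ε cc w hyp
    -- injectivity on the index set
    have hinj : Set.InjOn (fun x : Fin n' × (Fin (d-1) → Fin M) => φ x.1 x.2)
        ↑(univ : Finset (Fin n' × (Fin (d-1) → Fin M))) := by
      rintro ⟨j, k⟩ - ⟨j', k'⟩ - heq
      replace heq : φ j k = φ j' k' := heq
      obtain ⟨hmem1, hsep1⟩ := hφ j k
      obtain ⟨hmem2, hsep2⟩ := hφ j' k'
      rw [← heq] at hsep2
      obtain ⟨s1, hs1, A1, A2, A3, A4⟩ := pack j k _ _ hsep1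
      obtain ⟨s2, hs2, B1, B2, B3, B4⟩ := pack j' k' _ _ hsep2
      have hs1ne : s1 ≠ 0 := by rcases hs1 with rfl|rfl <;> norm_num
      have hs2ne : s2 ≠ 0 := by rcases hs2 with rfl|rfl <;> norm_num
      have hwne : (φ j k).1 iH ≠ 0 := by
        intro h0
        have hz1 : s1 * (φ j k).1 iH = 0 := by rw [h0]; ring
        have hc0 : s1*(φ j k).2 = 0 := zero_c hz1 A1 A2
        have hcoords : ∀ i : Fin (d-1), (φ j k).1 (embF i) = 0 := by
          intro i
          have hz := zero_coord hz1 hc0 (A3 i) (A4 i)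
          rcases mul_eq_zero.1 hz with h|h
          · exact absurd h hs1ne
          · exact h
        have hzero : (φ j k).1 = 0 := by
          ext t
          show (φ j k).1 t = (0:ℝ)
          by_cases ht : (t:ℕ) < d - 1
          · have hte : t = embF ⟨(t:ℕ), ht⟩ := by
              rw [hembdef]
            exact hte ▸ hcoords ⟨(t:ℕ), ht⟩
          · have hte : t = iH := by
              rw [hiHdef]
              exact Fin.ext (by omega)
            exact hte ▸ h0
        exact hW _ hmem1 hzero
      have hsgn1 : 0 ≤ s1 * (φ j k).1 iH := sign_nonneg hε0 A1 A2
      have hsgn2 : 0 ≤ s2 * (φ j k).1 iH := sign_nonneg hε0 B1 B2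
      have hs12 : s1 = s2 := by
        rcases hs1 with rfl|rfl <;> rcases hs2 with rfl|rfl
        · rfl
        · exfalso
          simp only [one_mul, neg_one_mul] at hsgn1 hsgn2
          exact hwne (le_antisymm (neg_nonneg.1 hsgn2) hsgn1)
        · exfalso
          simp only [one_mul, neg_one_mul] at hsgn1 hsgn2
          exact hwne (le_antisymm (neg_nonneg.1 hsgn1) hsgn2)
        · rfl
      subst hs12
      have hpos : 0 < s1 * (φ j k).1 iH :=
        lt_of_le_of_ne hsgn1 (Ne.symm (mul_ne_zero hs1ne hwne))
      have hc0 : 0 ≤ s1*(φ j k).2 := c_nonneg hsgn1 hε0 A1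
      have hj : (j:ℕ) = (j':ℕ) :=
        le_antisymm (core_j hε0 A1 B2 hpos) (core_j hε0 B1 A2 hpos)
      have hk : ∀ i, ((k i):ℕ) = ((k' i):ℕ) := fun i =>
        le_antisymm (core_k hc0 hpos (B3 i) (A4 i)) (core_k hc0 hpos (A3 i) (B4 i))
      exact Prod.ext (Fin.ext hj) (funext fun i => Fin.ext (hk i))
    -- counting
    have hcard1 : (univ : Finset (Fin n' × (Fin (d-1) → Fin M))).card ≤ Hfam.card :=
      card_le_card_of_injOn _ (fun a _ => (hφ a.1 a.2).1) hinj
    have huniv : (univ : Finset (Fin n' × (Fin (d-1) → Fin M))).card = n' * M^(d-1) := by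
      simp [Fintype.card_fun]
    have hHge : (n' : ℝ) * (M:ℝ)^(d-1) ≤ (Hfam.card : ℝ) := by
      rw [huniv] at hcard1
      exact_mod_cast hcard1
    -- nonemptiness bound
    have hH1 : (1:ℝ) ≤ (Hfam.card : ℝ) := by
      have hsub1 : ({rpt iH ε 0} : Finset (EuclideanSpace ℝ (Fin d))) ⊆ TR :=
        singleton_subset_iff.2 (hrptTR ⟨0, hn'1⟩)
      have hsub2 : ({spt iH ε 0} : Finset (EuclideanSpace ℝ (Fin d))) ⊆ TB :=
        singleton_subset_iff.2 (hsptTB ⟨0, hn'1⟩)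
      have hwitne : sgl iH (1:ℝ) ≠ 0 := by
        intro h0
        have h1 : sgl iH (1:ℝ) iH = (0 : EuclideanSpace ℝ (Fin d)) iH := by rw [h0]
        rw [sglS_apply_self] at h1
        norm_num at h1
      have hsepR : ∀ r ∈ ({rpt iH ε 0} : Finset (EuclideanSpace ℝ (Fin d))),
          ⟪sgl iH (1:ℝ), r⟫ < ε := by
        intro r hr
        rw [mem_singleton.1 hr, inner_rpt, sglS_apply_self, one_mul]
        have : 4*ε*((0:ℕ):ℝ) = 0 := by norm_num
        rw [this]
        exact hε0
      have hsepB : ∀ b ∈ ({spt iH ε 0} : Finset (EuclideanSpace ℝ (Fin d))),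
          ε < ⟪sgl iH (1:ℝ), b⟫ := by
        intro b hb
        rw [mem_singleton.1 hb, inner_spt, sglS_apply_self, one_mul]
        have : 4*ε*((0:ℕ):ℝ) + 2*ε = 2*ε := by norm_num
        rw [this]
        linarith
      obtain ⟨h, hh, -⟩ := hcov _ hsub1 _ hsub2
        ⟨_, mem_singleton_self _⟩ ⟨_, mem_singleton_self _⟩
        ⟨sgl iH (1:ℝ), ε, hwitne, hsepR, hsepB⟩
      have hpos : 0 < Hfam.card := card_pos.2 ⟨h, hh⟩
      exact_mod_cast hpos
    -- final arithmetic
    rcases Nat.eq_zero_or_pos (d-1) with hD0 | hD1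
    · -- d = 1
      have hn'eq : n' = n := by
        rw [hn'def, hD0]
        simp only [Nat.zero_mul, Nat.mul_zero, Nat.sub_zero]
        exact min_eq_left hnN
      rw [hD0, pow_zero, mul_one] at hHge ⊢
      rw [hn'eq] at hHge
      have hcle : 1/(2*(8*(d:ℝ))^d) ≤ 1 := by
        rw [div_le_one (by positivity)]
        have h1 : (1:ℝ) ≤ (8*(d:ℝ))^d := one_le_pow₀ (by
          have : (1:ℝ) ≤ (d:ℝ) := by exact_mod_cast hd
          linarith)
        linarith
      calc 1/(2*(8*(d:ℝ))^d) * n ≤ 1 * n :=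
            mul_le_mul_of_nonneg_right hcle (by positivity)
      _ = (n:ℝ) := one_mul _
      _ ≤ (Hfam.card : ℝ) := hHge
    · by_cases hbig : 4*(d-1) ≤ N
      · have hM1' : 1 ≤ M := hM1 hD1 hbig
        have hN8' : N ≤ 8*((d-1)*M) := hN8 hD1 hbig
        have e1 : (N:ℝ)^(d-1) ≤ (8*(d:ℝ))^d * (M:ℝ)^(d-1) := by
          have h1 : (N:ℝ)^(d-1) ≤ ((8*(((d:ℝ)-1))*(M:ℝ)))^(d-1) := by
            apply pow_le_pow_left₀ (by positivity)
            have hc : (N:ℝ) ≤ 8*(((d-1:ℕ)):ℝ)*(M:ℝ) := by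
              have h8 : N ≤ 8*(d-1)*M := by
                rw [Nat.mul_assoc]; exact hN8'
              exact_mod_cast h8
            have hco : (((d-1:ℕ)):ℝ) = (d:ℝ)-1 := by
              push_cast [Nat.cast_sub hd]
              ring
            rw [hco] at hc
            exact hc
          have h2 : ((8*(((d:ℝ)-1))*(M:ℝ)))^(d-1)
              = (8*((d:ℝ)-1))^(d-1) * (M:ℝ)^(d-1) := mul_pow _ _ _
          have h3 : (8*((d:ℝ)-1))^(d-1) ≤ (8*(d:ℝ))^(d-1) := by
            apply pow_le_pow_left₀
            · have : (1:ℝ) ≤ (d:ℝ) := by exact_mod_cast hd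
              linarith
            · have : (0:ℝ) ≤ (d:ℝ) := by positivity
              linarith
          have h4 : (8*(d:ℝ))^(d-1) ≤ (8*(d:ℝ))^d := by
            apply pow_le_pow_right₀
            · have : (1:ℝ) ≤ (d:ℝ) := by exact_mod_cast hd
              linarith
            · omega
          have hM0 : (0:ℝ) ≤ (M:ℝ)^(d-1) := by positivity
          calc (N:ℝ)^(d-1) ≤ (8*((d:ℝ)-1))^(d-1) * (M:ℝ)^(d-1) := by
                rw [← h2]; exact h1
          _ ≤ (8*(d:ℝ))^(d-1) * (M:ℝ)^(d-1) := mul_le_mul_of_nonneg_right h3 hM0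
          _ ≤ (8*(d:ℝ))^d * (M:ℝ)^(d-1) := mul_le_mul_of_nonneg_right h4 hM0
        have e2 : (n:ℝ) ≤ 2*(n':ℝ) := by exact_mod_cast hn2n'
        have e3 : (n:ℝ) * (N:ℝ)^(d-1) ≤ (2*(n':ℝ)) * ((8*(d:ℝ))^d * (M:ℝ)^(d-1)) :=
          mul_le_mul e2 e1 (by positivity) (by positivity)
        have e4 : 1/(2*(8*(d:ℝ))^d) * ((n:ℝ) * (N:ℝ)^(d-1)) ≤ (n':ℝ)*(M:ℝ)^(d-1) := by
          rw [div_mul_eq_mul_div, one_mul, div_le_iff₀ (by positivity)]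
          calc (n:ℝ) * (N:ℝ)^(d-1) ≤ (2*(n':ℝ)) * ((8*(d:ℝ))^d * (M:ℝ)^(d-1)) := e3
          _ = (n':ℝ)*(M:ℝ)^(d-1) * (2*(8*(d:ℝ))^d) := by ring
        calc 1/(2*(8*(d:ℝ))^d) * (n:ℝ) * (N:ℝ)^(d-1)
            = 1/(2*(8*(d:ℝ))^d) * ((n:ℝ) * (N:ℝ)^(d-1)) := by ring
        _ ≤ (n':ℝ)*(M:ℝ)^(d-1) := e4
        _ ≤ (Hfam.card : ℝ) := hHge
      · push_neg at hbig
        have hnat : n * N^(d-1) ≤ (8*d)^d := by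
          calc n * N^(d-1) ≤ N * N^(d-1) := Nat.mul_le_mul_right _ hnN
          _ = N^d := by
              conv_rhs => rw [show d = (d-1)+1 from by omega]
              rw [pow_succ']
          _ ≤ (8*d)^d := Nat.pow_le_pow_left (by omega) d
        have e1 : (n:ℝ) * (N:ℝ)^(d-1) ≤ (8*(d:ℝ))^d := by exact_mod_cast hnat
        calc 1/(2*(8*(d:ℝ))^d) * (n:ℝ) * (N:ℝ)^(d-1)
            = ((n:ℝ) * (N:ℝ)^(d-1)) / (2*(8*(d:ℝ))^d) := by ring
        _ ≤ ((8*(d:ℝ))^d) / (2*(8*(d:ℝ))^d) := by gcongr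
        _ = 1/2 := by
            rw [div_eq_div_iff (by positivity) (by norm_num)]
            ring
        _ ≤ 1 := by norm_num
        _ ≤ (Hfam.card : ℝ) := hH1
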